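/- Let S → 𝒜 be a ring homomorphism of (commutative) Noetherian rings and 𝔞 an ideal of S such that I = 𝔞𝒜 is contained in the Jacobson radical of 𝒜. Let M and N be finite 𝒜-modules, and set Mₙ = M/I^{n+1}M and Nₙ = N/I^{n+1}N. If for every n there exists a surjective 𝒜-linear map φₙ : Mₙ → Nₙ, then there exists a surjective 𝒜-linear map ψ : M → N. -/

import Mathlib

section Aux

variable {A : Type} [CommRing A] {P : Type} [AddCommGroup P] [Module A P]

/-- Linear combination with fixed coefficient vector `x : Fin a → A`, as a linear map
in the vector of module elements. -/
noncomputable def comboAux {a : ℕ} (x : Fin a → A) : (Fin a → P) →ₗ[A] P :=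
  ∑ i, x i • LinearMap.proj i

@[simp] lemma comboAux_apply {a : ℕ} (x : Fin a → A) (u : Fin a → P) :
    comboAux x u = ∑ i, x i • u i := by
  simp [comboAux]

/-- Linear combination with fixed module elements `m : Fin a → P`, as a linear map
in the coefficients. -/
noncomputable def lcAux (A : Type) [CommRing A] {P : Type} [AddCommGroup P] [Module A P]
    {a : ℕ} (m : Fin a → P) : (Fin a → A) →ₗ[A] P :=
  ∑ i, (LinearMap.proj i).smulRight (m i)

@[simp] lemma lcAux_apply {a : ℕ} (m : Fin a → P) (x : Fin a → A) :
    lcAux A m x = ∑ i, x i • m i := by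
  simp [lcAux]

lemma range_lcAux {a : ℕ} (m : Fin a → P) :
    LinearMap.range (lcAux A m) = Submodule.span A (Set.range m) := by
  apply le_antisymm
  · rintro _ ⟨x, rfl⟩
    rw [lcAux_apply]
    exact Submodule.sum_mem _ fun i _ =>
      Submodule.smul_mem _ _ (Submodule.subset_span ⟨i, rfl⟩)
  · rw [Submodule.span_le]
    rintro _ ⟨i, rfl⟩
    refine ⟨Pi.single i 1, ?_⟩
    rw [lcAux_apply]
    rw [Finset.sum_eq_single i]
    · simp
    · intro j _ hj
      simp [Pi.single_apply, hj]
    · simp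

lemma mem_smul_top_pi {b : ℕ} (J : Ideal A) (v : Fin b → P)
    (h : ∀ j, v j ∈ (J • ⊤ : Submodule A P)) :
    v ∈ (J • ⊤ : Submodule A (Fin b → P)) := by
  have hv : v = ∑ j, Pi.single j (v j) := (Finset.univ_sum_single v).symm
  rw [hv]
  refine Submodule.sum_mem _ fun j _ => ?_
  have h1 : (LinearMap.single A (fun _ : Fin b => P) j) (v j) ∈
      Submodule.map (LinearMap.single A (fun _ : Fin b => P) j) (J • ⊤) :=
    Submodule.mem_map_of_mem (h j)
  rw [Submodule.map_smul''] at h1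
  exact Submodule.smul_mono le_rfl le_top h1

lemma smul_top_pi_component {b : ℕ} (J : Ideal A) (v : Fin b → P)
    (h : v ∈ (J • ⊤ : Submodule A (Fin b → P))) (j : Fin b) :
    v j ∈ (J • ⊤ : Submodule A P) := by
  have h1 : (LinearMap.proj j : (Fin b → P) →ₗ[A] P) v ∈
      Submodule.map (LinearMap.proj j : (Fin b → P) →ₗ[A] P) (J • ⊤) :=
    Submodule.mem_map_of_mem h
  rw [Submodule.map_smul''] at h1
  exact Submodule.smul_mono le_rfl le_top h1

end Aux

/-- Let `S → 𝒜` be a ring homomorphism of commutative Noetherian rings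
and `𝔞` an ideal of `S` such that `I = 𝔞𝒜` is contained in the Jacobson radical of `𝒜`.
Let `M` and `N` be finite `𝒜`-modules, `Mₙ = M/I^{n+1}M`, `Nₙ = N/I^{n+1}N`.
If for every `n` there is a surjective `𝒜`-linear map `Mₙ → Nₙ`, then there is a
surjective `𝒜`-linear map `M → N`. -/
theorem stmt0
    (S A : Type) [CommRing S] [CommRing A] [IsNoetherianRing S] [IsNoetherianRing A]
    [Algebra S A] (𝔞 : Ideal S)
    (I : Ideal A) (hI : I = Ideal.map (algebraMap S A) 𝔞)
    (hJac : I ≤ (⊥ : Ideal A).jacobson)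
    (M N : Type) [AddCommGroup M] [Module A M] [AddCommGroup N] [Module A N]
    [Module.Finite A M] [Module.Finite A N]
    (hsurj : ∀ n : ℕ, ∃ φ : (M ⧸ (I ^ (n + 1) • ⊤ : Submodule A M)) →ₗ[A]
        (N ⧸ (I ^ (n + 1) • ⊤ : Submodule A N)), Function.Surjective φ) :
    ∃ ψ : M →ₗ[A] N, Function.Surjective ψ := by
  classical
  -- generators of M
  obtain ⟨a, m, hm⟩ := Module.Finite.exists_fin (R := A) (M := M)
  set π : (Fin a → A) →ₗ[A] M := lcAux A m with hπdef
  have hπ : Function.Surjective π := by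
    rw [← LinearMap.range_eq_top, hπdef, range_lcAux, hm]
  -- finitely many generators of the relations
  obtain ⟨b, t, ht⟩ := Submodule.fg_iff_exists_fin_generating_family.mp
    (IsNoetherian.noetherian (LinearMap.ker π))
  -- the relation evaluation map
  set T : (Fin a → N) →ₗ[A] (Fin b → N) := LinearMap.pi (fun j => comboAux (t j)) with hTdef
  -- Artin–Rees
  obtain ⟨k, hk⟩ := Ideal.exists_pow_inf_eq_pow_smul I (LinearMap.range T)
  obtain ⟨φ, hφ⟩ := hsurj k
  -- lifts of the images of the generators of M
  have hlift : ∀ i : Fin a, ∃ y : N,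
      Submodule.Quotient.mk y = φ (Submodule.Quotient.mk (m i)) := fun i =>
    Submodule.Quotient.mk_surjective _ _
  choose u hu using hlift
  -- key computation: for x in ker π, the combination of the uᵢ lies in I^(k+1) • ⊤
  have keyA : ∀ x ∈ LinearMap.ker π, lcAux A u x ∈ (I ^ (k + 1) • ⊤ : Submodule A N) := by
    intro x hx
    rw [← Submodule.Quotient.mk_eq_zero]
    have : (Submodule.Quotient.mk (lcAux A u x) :
        N ⧸ (I ^ (k + 1) • ⊤ : Submodule A N)) =
        φ (Submodule.Quotient.mk (π x)) := by
      rw [hπdef, lcAux_apply, lcAux_apply]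
      have e1 : (Submodule.Quotient.mk (∑ i, x i • u i) :
          N ⧸ (I ^ (k + 1) • ⊤ : Submodule A N)) =
          ∑ i, x i • (Submodule.Quotient.mk (u i) :
            N ⧸ (I ^ (k + 1) • ⊤ : Submodule A N)) := by
        simp only [← Submodule.mkQ_apply, map_sum, map_smul]
      have e2 : (Submodule.Quotient.mk (∑ i, x i • m i) :
          M ⧸ (I ^ (k + 1) • ⊤ : Submodule A M)) =
          ∑ i, x i • (Submodule.Quotient.mk (m i) :
            M ⧸ (I ^ (k + 1) • ⊤ : Submodule A M)) := by
        simp only [← Submodule.mkQ_apply, map_sum, map_smul]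
      rw [e1, e2, map_sum]
      simp only [map_smul, hu]
    rw [this, (LinearMap.mem_ker.mp hx : π x = 0)]
    simp
  -- the uᵢ generate N modulo I^(k+1)
  have keyB : Submodule.span A (Set.range u) ⊔ (I ^ (k + 1) • ⊤ : Submodule A N) = ⊤ := by
    rw [sup_comm, ← Submodule.map_mkQ_eq_top, Submodule.map_span, ← Set.range_comp]
    have hcomp : (Submodule.mkQ _) ∘ u = φ ∘ (Submodule.mkQ _) ∘ m := by
      funext i
      simp [Submodule.mkQ_apply, hu]
    rw [hcomp, Set.range_comp, Submodule.span_image, Set.range_comp,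
      Submodule.span_image]
    have hmtop : Submodule.span A (Set.range ((Submodule.mkQ
        (I ^ (k + 1) • ⊤ : Submodule A M)) ∘ m)) = ⊤ := by
      rw [Set.range_comp, Submodule.span_image, hm, Submodule.map_top,
        Submodule.range_mkQ]
    rw [Set.range_comp, Submodule.span_image] at hmtop
    rw [hmtop, Submodule.map_top, LinearMap.range_eq_top.mpr hφ]
  -- T u lies in I^(k+1) • ⊤ ⊓ range T
  have hTu : T u ∈ (I ^ (k + 1) • ⊤ : Submodule A (Fin b → N)) ⊓ LinearMap.range T := by
    constructor
    · apply mem_smul_top_pi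
      intro j
      have : T u j = lcAux A u (t j) := by
        simp [hTdef, LinearMap.pi_apply, comboAux_apply, lcAux_apply]
      rw [this]
      exact keyA (t j) (by rw [← ht]; exact Submodule.subset_span ⟨j, rfl⟩)
    · exact ⟨u, rfl⟩
  -- Artin–Rees correction
  have hAR : T u ∈ Submodule.map T (I • ⊤ : Submodule A (Fin a → N)) := by
    rw [hk (k + 1) (Nat.le_succ k)] at hTu
    have h1 : I ^ (k + 1 - k) • ((I ^ k • ⊤ : Submodule A (Fin b → N)) ⊓
        LinearMap.range T) ≤ I • LinearMap.range T := by
      have : k + 1 - k = 1 := by omega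
      rw [this, pow_one]
      exact smul_mono_right _ inf_le_right
    have h2 := h1 hTu
    rwa [← Submodule.map_top T, ← Submodule.map_smul''] at h2
  obtain ⟨v, hv, hvu⟩ := hAR
  -- the corrected vector
  set w : Fin a → N := u - v with hwdef
  have hTw : T w = 0 := by
    rw [hwdef, map_sub, hvu, sub_self]
  -- w kills all relations
  have hker : LinearMap.ker π ≤ LinearMap.ker (lcAux A w) := by
    rw [← ht, Submodule.span_le]
    rintro _ ⟨j, rfl⟩
    have : lcAux A w (t j) = T w j := by
      simp [hTdef, LinearMap.pi_apply, comboAux_apply, lcAux_apply]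
    rw [SetLike.mem_coe, LinearMap.mem_ker, this, hTw]
    rfl
  -- the induced map M → N
  set ψ : M →ₗ[A] N :=
    (Submodule.liftQ (LinearMap.ker π) (lcAux A w) hker) ∘ₗ
      (π.quotKerEquivOfSurjective hπ).symm.toLinearMap with hψdef
  refine ⟨ψ, ?_⟩
  -- surjectivity of lcAux A w via Nakayama
  have hwspan : Submodule.span A (Set.range w) = ⊤ := by
    have hsub : Submodule.span A (Set.range u) ≤
        Submodule.span A (Set.range w) ⊔ (I • ⊤ : Submodule A N) := by
      rw [Submodule.span_le]
      rintro _ ⟨i, rfl⟩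
      have : u i = w i + v i := by simp [hwdef]
      rw [this]
      exact Submodule.add_mem _
        (Submodule.mem_sup_left (Submodule.subset_span ⟨i, rfl⟩))
        (Submodule.mem_sup_right (smul_top_pi_component I v hv i))
    have htop : Submodule.span A (Set.range w) ⊔ (I • ⊤ : Submodule A N) = ⊤ := by
      apply eq_top_iff.mpr
      calc (⊤ : Submodule A N)
          = Submodule.span A (Set.range u) ⊔ (I ^ (k + 1) • ⊤ : Submodule A N) :=
            keyB.symm
        _ ≤ (Submodule.span A (Set.range w) ⊔ (I • ⊤ : Submodule A N)) ⊔
            (I • ⊤ : Submodule A N) := by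
            apply sup_le_sup hsub
            exact Submodule.smul_mono (Ideal.pow_le_self (Nat.succ_ne_zero k)) le_rfl
        _ = Submodule.span A (Set.range w) ⊔ (I • ⊤ : Submodule A N) := by
            rw [sup_assoc, sup_idem]
    -- Nakayama
    have hnak := Submodule.sup_eq_sup_smul_of_le_smul_of_le_jacobson
      (I := I) (J := ⊥) (N := Submodule.span A (Set.range w)) (N' := (⊤ : Submodule A N))
      Module.Finite.fg_top hJac (htop.ge.trans le_rfl)
    rw [Submodule.bot_smul, sup_bot_eq, sup_top_eq] at hnak
    exact hnak.symm
  have hlcw : Function.Surjective (lcAux A w) := by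
    rw [← LinearMap.range_eq_top, range_lcAux, hwspan]
  -- conclude
  have hlift_surj : Function.Surjective
      (Submodule.liftQ (LinearMap.ker π) (lcAux A w) hker) := by
    have hcomp : (Submodule.liftQ (LinearMap.ker π) (lcAux A w) hker) ∘ₗ
        (LinearMap.ker π).mkQ = lcAux A w := Submodule.liftQ_mkQ _ _ _
    intro y
    obtain ⟨x, hx⟩ := hlcw y
    exact ⟨(LinearMap.ker π).mkQ x, (LinearMap.congr_fun hcomp x).trans hx⟩
  rw [hψdef]
  exact hlift_surj.comp (π.quotKerEquivOfSurjective hπ).symm.surjective
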